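/- arXiv:2106.09268 — 3 statements merged into one kernel-verified Lean document; each statement's English description precedes it below -/
import Mathlib

section
/- Let E be a complex inner product space and T : E → E a linear map that is symmetric, i.e. ⟪T u, v⟫ = ⟪u, T v⟫ for all u, v ∈ E. Let δ ≥ 0, C ≥ 0 and v ∈ E satisfy ‖T^s v‖ ≤ δ^s · C for every s ∈ ℕ. Then for every eigenvector w of T whose eigenvalue λ satisfies |λ| > δ, one has ⟪v, w⟫ = 0. -/
open scoped InnerProductSpace

/-- Let `E` be a complex inner product space and `T : E → E` a linear map that is symmetric,
i.e. `⟪T u, v⟫ = ⟪u, T v⟫` for all `u, v`.  Let `δ ≥ 0`, `C ≥ 0` and `v ∈ E` satisfy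
`‖T^s v‖ ≤ δ^s · C` for every `s ∈ ℕ`.  Then for every eigenvector `w` of `T` whose eigenvalue
`λ` satisfies `|λ| > δ`, one has `⟪v, w⟫ = 0`. -/
theorem orthogonal_of_iterates_bound
    {E : Type*} [NormedAddCommGroup E] [InnerProductSpace ℂ E]
    (T : E →ₗ[ℂ] E) (hT : ∀ u v : E, ⟪T u, v⟫_ℂ = ⟪u, T v⟫_ℂ)
    (δ C : ℝ) (hδ : 0 ≤ δ) (hC : 0 ≤ C)
    (v : E) (hv : ∀ s : ℕ, ‖(T ^ s) v‖ ≤ δ ^ s * C)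
    (w : E) (hw : w ≠ 0) (lam : ℂ) (hTw : T w = lam • w)
    (hlam : δ < ‖lam‖) :
    ⟪v, w⟫_ℂ = 0 := by
  have hpow : ∀ s : ℕ, (T ^ s) w = lam ^ s • w := by
    intro s
    induction s with
    | zero => simp
    | succ n ih =>
      rw [pow_succ', pow_succ']
      simp [Module.End.mul_apply, ih, hTw, smul_smul, mul_comm]
  have hsym : ∀ (s : ℕ) (u x : E), ⟪(T ^ s) u, x⟫_ℂ = ⟪u, (T ^ s) x⟫_ℂ := by
    intro s
    induction s with
    | zero => simp
    | succ n ih =>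
      intro u x
      rw [pow_succ]
      simp only [Module.End.mul_apply]
      rw [ih (T u) x, hT, ← Module.End.mul_apply T (T ^ n), ← pow_succ', pow_succ]
      simp [Module.End.mul_apply]
  have key : ∀ s : ℕ, ‖lam‖ ^ s * ‖⟪v, w⟫_ℂ‖ ≤ δ ^ s * (C * ‖w‖) := by
    intro s
    have h1 : ⟪v, (T ^ s) w⟫_ℂ = lam ^ s * ⟪v, w⟫_ℂ := by
      rw [hpow s, inner_smul_right]
    have h2 : ‖⟪(T ^ s) v, w⟫_ℂ‖ ≤ δ ^ s * C * ‖w‖ := by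
      calc ‖⟪(T ^ s) v, w⟫_ℂ‖ ≤ ‖(T ^ s) v‖ * ‖w‖ := norm_inner_le_norm _ _
        _ ≤ δ ^ s * C * ‖w‖ := by
          exact mul_le_mul_of_nonneg_right (hv s) (norm_nonneg w)
    calc ‖lam‖ ^ s * ‖⟪v, w⟫_ℂ‖ = ‖lam ^ s * ⟪v, w⟫_ℂ‖ := by
          rw [norm_mul, norm_pow]
      _ = ‖⟪(T ^ s) v, w⟫_ℂ‖ := by rw [← h1, hsym]
      _ ≤ δ ^ s * C * ‖w‖ := h2
      _ = δ ^ s * (C * ‖w‖) := by ring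
  have hA : 0 < ‖lam‖ := lt_of_le_of_lt hδ hlam
  have key2 : ∀ s : ℕ, ‖⟪v, w⟫_ℂ‖ ≤ (δ / ‖lam‖) ^ s * (C * ‖w‖) := by
    intro s
    have := key s
    rw [div_pow]
    calc ‖⟪v, w⟫_ℂ‖ ≤ δ ^ s * (C * ‖w‖) / ‖lam‖ ^ s :=
          (le_div_iff₀ (by positivity)).mpr (by rwa [mul_comm] at this)
      _ = δ ^ s / ‖lam‖ ^ s * (C * ‖w‖) := by ring
  have hr : δ / ‖lam‖ < 1 := (div_lt_one hA).mpr hlam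
  have hr0 : 0 ≤ δ / ‖lam‖ := div_nonneg hδ hA.le
  have htend : Filter.Tendsto (fun s : ℕ => (δ / ‖lam‖) ^ s * (C * ‖w‖))
      Filter.atTop (nhds 0) := by
    have := (tendsto_pow_atTop_nhds_zero_of_lt_one hr0 hr).mul_const (C * ‖w‖)
    simpa using this
  have : ‖⟪v, w⟫_ℂ‖ ≤ 0 := ge_of_tendsto' htend key2
  have := le_antisymm this (norm_nonneg _)
  exact norm_eq_zero.mp this
end

section
/- Let n ≥ 1 and let μ_1, …, μ_n be nonzero real numbers; let j_0 be the number of indices i with μ_i < 0. Fix j ∈ {0, 1, …, n}. Then the limit as t → +∞ of (∏_{i=1}^n μ_i/(1 − e^{−t μ_i})) · (∑_{J ⊆ {1,…,n}, |J| = j} e^{−t ∑_{l∈J} μ_l}) exists and equals ∏_{i=1}^n |μ_i| if j = j_0, and equals 0 if j ≠ j_0. -/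
open Filter

private lemma exp_lim_pos (a : ℝ) (ha : 0 < a) :
    Tendsto (fun t : ℝ => Real.exp (-t * a)) atTop (nhds 0) := by
  have h : Tendsto (fun t : ℝ => -t * a) atTop atBot :=
    tendsto_neg_atTop_atBot.atBot_mul_const ha
  exact Real.tendsto_exp_atBot.comp h

private lemma exp_lim_neg (a : ℝ) (ha : a < 0) :
    Tendsto (fun t : ℝ => Real.exp (t * a)) atTop (nhds 0) := by
  have h : Tendsto (fun t : ℝ => t * a) atTop atBot :=
    tendsto_id.atTop_mul_const_of_neg ha
  exact Real.tendsto_exp_atBot.comp h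

private lemma key_rw (a t : ℝ) :
    1 - Real.exp (-t * a) = (Real.exp (t * a) - 1) / Real.exp (t * a) := by
  have hy : Real.exp (t * a) ≠ 0 := (Real.exp_pos _).ne'
  rw [show (-t * a) = -(t * a) by ring, Real.exp_neg]
  field_simp

private lemma lim_out (a : ℝ) (ha : a ≠ 0) :
    Tendsto (fun t : ℝ => a / (1 - Real.exp (-t * a))) atTop
      (nhds (if a < 0 then 0 else a)) := by
  rcases ha.lt_or_gt with h | h
  · rw [if_pos h]
    have key : ∀ t : ℝ, a / (1 - Real.exp (-t * a))
        = a * Real.exp (t * a) / (Real.exp (t * a) - 1) := by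
      intro t
      rw [key_rw, div_div_eq_mul_div]
    have h2 : Tendsto (fun t : ℝ => a * Real.exp (t * a) / (Real.exp (t * a) - 1))
        atTop (nhds ((a * 0) / (0 - 1))) :=
      (tendsto_const_nhds.mul (exp_lim_neg a h)).div
        ((exp_lim_neg a h).sub tendsto_const_nhds) (by norm_num)
    rw [show (a * 0) / ((0:ℝ) - 1) = 0 by norm_num] at h2
    exact Tendsto.congr (fun t => (key t).symm) h2
  · rw [if_neg (not_lt.mpr h.le)]
    have h1 : Tendsto (fun t : ℝ => 1 - Real.exp (-t * a)) atTop (nhds 1) := by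
      simpa using tendsto_const_nhds.sub (exp_lim_pos a h)
    have h3 : Tendsto (fun t : ℝ => a / (1 - Real.exp (-t * a))) atTop (nhds (a / 1)) :=
      (tendsto_const_nhds (x := a)).div h1 one_ne_zero
    simpa using h3

private lemma lim_frac (a : ℝ) (ha : a ≠ 0) :
    Tendsto (fun t : ℝ => Real.exp (-t * a) / (1 - Real.exp (-t * a))) atTop
      (nhds (if a < 0 then -1 else 0)) := by
  have key : ∀ t : ℝ, Real.exp (-t * a) / (1 - Real.exp (-t * a))
      = 1 / (Real.exp (t * a) - 1) := by
    intro t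
    have hy : Real.exp (t * a) ≠ 0 := (Real.exp_pos _).ne'
    rw [key_rw, show (-t * a) = -(t * a) by ring, Real.exp_neg,
      div_div_eq_mul_div, inv_mul_cancel₀ hy]
  rcases ha.lt_or_gt with h | h
  · rw [if_pos h]
    have h2 : Tendsto (fun t : ℝ => (1 : ℝ) / (Real.exp (t * a) - 1))
        atTop (nhds (1 / (0 - 1))) :=
      tendsto_const_nhds.div ((exp_lim_neg a h).sub tendsto_const_nhds) (by norm_num)
    rw [show (1:ℝ) / ((0:ℝ) - 1) = -1 by norm_num] at h2
    exact Tendsto.congr (fun t => (key t).symm) h2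
  · rw [if_neg (not_lt.mpr h.le)]
    have hT : Tendsto (fun t : ℝ => Real.exp (t * a) - 1) atTop atTop := by
      have h1 : Tendsto (fun t : ℝ => t * a) atTop atTop :=
        tendsto_id.atTop_mul_const h
      exact (Real.tendsto_exp_atTop.comp h1).atTop_add tendsto_const_nhds
    have h2 := tendsto_const_nhds (x := (1:ℝ)) |>.div_atTop hT
    exact Tendsto.congr (fun t => (key t).symm) h2

private lemma lim_in (a : ℝ) (ha : a ≠ 0) :
    Tendsto (fun t : ℝ => a / (1 - Real.exp (-t * a)) * Real.exp (-t * a)) atTop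
      (nhds (if a < 0 then -a else 0)) := by
  have h2 := (lim_frac a ha).const_mul a
  have heq : (fun t : ℝ => a / (1 - Real.exp (-t * a)) * Real.exp (-t * a))
      = fun t : ℝ => a * (Real.exp (-t * a) / (1 - Real.exp (-t * a))) := by
    funext t; ring
  rw [heq]
  convert h2 using 2
  split_ifs <;> ring

/-- Let `n ≥ 1` and let `μ_1, …, μ_n` be nonzero real numbers, `j₀` the number of indices `i`
with `μ_i < 0`, and `j ∈ {0, …, n}`.  Then, as `t → +∞`,
`(∏_i μ_i/(1 − e^{−t μ_i})) · (∑_{|J| = j} e^{−t ∑_{l∈J} μ_l})`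
converges to `∏_i |μ_i|` if `j = j₀`, and to `0` otherwise. -/
theorem heat_integrand_limit
    (n : ℕ) (hn : 1 ≤ n) (μ : Fin n → ℝ) (hμ : ∀ i, μ i ≠ 0)
    (j : ℕ) (hj : j ≤ n) :
    Tendsto
      (fun t : ℝ =>
        (∏ i, μ i / (1 - Real.exp (-t * μ i))) *
          ∑ J ∈ Finset.powersetCard j (Finset.univ : Finset (Fin n)),
            Real.exp (-t * ∑ l ∈ J, μ l))
      atTop
      (nhds (if j = (Finset.univ.filter fun i => μ i < 0).card then ∏ i, |μ i| else 0)) := by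
  classical
  set negS : Finset (Fin n) := Finset.univ.filter fun i => μ i < 0 with hnegS
  -- limit of each factor
  set L : Finset (Fin n) → Fin n → ℝ := fun J i =>
    if i ∈ J then (if μ i < 0 then -μ i else 0) else (if μ i < 0 then 0 else μ i) with hL
  -- rewrite function as sum over J of products
  have hfun : ∀ t : ℝ,
      (∏ i, μ i / (1 - Real.exp (-t * μ i))) *
        ∑ J ∈ Finset.powersetCard j (Finset.univ : Finset (Fin n)),
          Real.exp (-t * ∑ l ∈ J, μ l)
      = ∑ J ∈ Finset.powersetCard j (Finset.univ : Finset (Fin n)),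
          ∏ i, (μ i / (1 - Real.exp (-t * μ i)) *
            (if i ∈ J then Real.exp (-t * μ i) else 1)) := by
    intro t
    rw [Finset.mul_sum]
    refine Finset.sum_congr rfl fun J hJ => ?_
    rw [Finset.prod_mul_distrib]
    congr 1
    rw [Finset.prod_ite_mem, Finset.univ_inter, ← Real.exp_sum, Finset.mul_sum]
  -- each summand tends to ∏ i, L J i
  have hterm : ∀ J ∈ Finset.powersetCard j (Finset.univ : Finset (Fin n)),
      Tendsto (fun t : ℝ => ∏ i, (μ i / (1 - Real.exp (-t * μ i)) *
          (if i ∈ J then Real.exp (-t * μ i) else 1))) atTop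
        (nhds (∏ i, L J i)) := by
    intro J _
    refine tendsto_finset_prod _ fun i _ => ?_
    by_cases hi : i ∈ J
    · simp only [hL, if_pos hi]
      exact lim_in (μ i) (hμ i)
    · simp only [hL, if_neg hi, mul_one]
      exact lim_out (μ i) (hμ i)
  have hsum := tendsto_finset_sum _ hterm
  have := hsum.congr (fun t => (hfun t).symm)
  convert this using 2
  -- evaluate the limit value
  have hprod : ∀ J : Finset (Fin n),
      (∏ i, L J i) = if J = negS then ∏ i, |μ i| else 0 := by
    intro J
    by_cases hJ : J = negS
    · rw [if_pos hJ, hJ]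
      refine Finset.prod_congr rfl fun i _ => ?_
      by_cases hi : μ i < 0
      · have : i ∈ negS := by simp [hnegS, hi]
        simp [hL, this, hi, abs_of_neg hi]
      · have : i ∉ negS := by simp [hnegS, hi]
        simp [hL, this, hi, abs_of_nonneg (not_lt.mp hi)]
    · rw [if_neg hJ]
      have : ∃ i, ¬ (i ∈ J ↔ i ∈ negS) := by
        by_contra hc
        push_neg at hc
        exact hJ (Finset.ext hc)
      obtain ⟨i, hi⟩ := this
      refine Finset.prod_eq_zero (Finset.mem_univ i) ?_
      have hmem : i ∈ negS ↔ μ i < 0 := by simp [hnegS]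
      by_cases h1 : i ∈ J
      · have h2 : ¬ μ i < 0 := by
          intro h3; exact hi ⟨fun _ => hmem.mpr h3, fun _ => h1⟩
        simp [hL, h1, h2]
      · have h2 : μ i < 0 := by
          by_contra h3
          exact hi ⟨fun h => absurd h h1, fun h => absurd (hmem.mp h) h3⟩
        simp [hL, h1, h2]
  simp only [hprod]
  rw [Finset.sum_ite_eq' (Finset.powersetCard j Finset.univ) negS
    (fun _ => ∏ i, |μ i|)]
  simp only [Finset.mem_powersetCard_univ]
  by_cases hc : j = negS.card
  · simp [hc]
  · rw [if_neg hc, if_neg (fun h => hc h.symm)]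
end

section
/- Let R and L be n×n complex Hermitian matrices and j ∈ {0, …, n}. Assume L satisfies condition Y(j). Then the set ℝ(j) = {η ∈ ℝ : the Hermitian matrix R − 2ηL has exactly j negative and n − j positive eigenvalues} is a bounded subset of ℝ. -/
section Aux

open Matrix Finset

variable {n : ℕ} {M : Matrix (Fin n) (Fin n) ℂ}

noncomputable def qf (M : Matrix (Fin n) (Fin n) ℂ) (x : EuclideanSpace ℂ (Fin n)) : ℝ :=
  Complex.re (inner ℂ x (Matrix.toEuclideanLin M x) : ℂ)

lemma toEuclideanLin_eigenvectorBasis (hM : M.IsHermitian) (i : Fin n) :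
    Matrix.toEuclideanLin M (hM.eigenvectorBasis i) =
      (hM.eigenvalues i : ℂ) • hM.eigenvectorBasis i := by
  apply PiLp.ext
  intro k
  have := congrFun (hM.mulVec_eigenvectorBasis i) k
  simpa [Matrix.toEuclideanLin_apply, Complex.real_smul] using this

lemma repr_toEuclideanLin (hM : M.IsHermitian) (x : EuclideanSpace ℂ (Fin n)) (i : Fin n) :
    hM.eigenvectorBasis.repr (Matrix.toEuclideanLin M x) i =
      (hM.eigenvalues i : ℂ) * hM.eigenvectorBasis.repr x i := by
  have hx : Matrix.toEuclideanLin M x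
      = ∑ k, ((hM.eigenvalues k : ℂ) * hM.eigenvectorBasis.repr x k) • hM.eigenvectorBasis k := by
    conv_lhs => rw [← hM.eigenvectorBasis.sum_repr x]
    rw [map_sum]
    simp only [_root_.map_smul, toEuclideanLin_eigenvectorBasis hM, smul_smul]
    congr 1; ext k; rw [mul_comm]
  rw [OrthonormalBasis.repr_apply_apply, hx]
  exact hM.eigenvectorBasis.orthonormal.inner_right_fintype _ i

lemma qf_eq_sum (hM : M.IsHermitian) (x : EuclideanSpace ℂ (Fin n)) :
    qf M x = ∑ i, hM.eigenvalues i * ‖hM.eigenvectorBasis.repr x i‖ ^ 2 := by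
  have h1 : (inner ℂ x (Matrix.toEuclideanLin M x) : ℂ) =
      inner ℂ (hM.eigenvectorBasis.repr x) (hM.eigenvectorBasis.repr (Matrix.toEuclideanLin M x)) := by
    rw [LinearIsometryEquiv.inner_map_map]
  rw [qf, h1]
  rw [PiLp.inner_apply]
  rw [Complex.re_sum]
  congr 1; ext i
  rw [repr_toEuclideanLin hM]
  simp [Complex.sq_norm, Complex.normSq_apply, Complex.mul_re,
    Complex.conj_re, Complex.conj_im]
  ring

lemma norm_sq_eq_sum (hM : M.IsHermitian) (x : EuclideanSpace ℂ (Fin n)) :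
    ‖x‖ ^ 2 = ∑ i, ‖hM.eigenvectorBasis.repr x i‖ ^ 2 := by
  rw [← hM.eigenvectorBasis.repr.norm_map x, EuclideanSpace.norm_eq,
    Real.sq_sqrt (by positivity)]

lemma card_neg_le (hM : M.IsHermitian) (W : Submodule ℂ (EuclideanSpace ℂ (Fin n)))
    (hW : ∀ x ∈ W, x ≠ 0 → qf M x < 0) :
    Module.finrank ℂ W ≤ (Finset.univ.filter fun i => hM.eigenvalues i < 0).card := by
  classical
  set v := hM.eigenvectorBasis with hv
  set S : Finset (Fin n) := Finset.univ.filter (fun i => ¬ hM.eigenvalues i < 0) with hS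
  set P := Submodule.span ℂ (⇑v '' ↑S) with hP
  have hli : LinearIndependent ℂ (fun i : ↥(S : Set (Fin n)) => v i) :=
    v.orthonormal.linearIndependent.comp _ Subtype.val_injective
  have hrange : Set.range (fun i : ↥(S : Set (Fin n)) => v i) = ⇑v '' ↑S := by
    rw [← Set.image_eq_range]
  have hPrank : Module.finrank ℂ P = S.card := by
    rw [hP, ← hrange, finrank_span_eq_card hli]
    simp
  have hPnn : ∀ x ∈ P, 0 ≤ qf M x := by
    intro x hx
    have hsupp : ∀ i, i ∉ S → v.repr x i = 0 := by
      intro i hi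
      have : x ∈ Submodule.span ℂ (⇑v.toBasis '' ↑S) := by
        simpa [OrthonormalBasis.coe_toBasis] using hx
      have h2 := (v.toBasis.mem_span_image).1 this
      by_contra h0
      have : i ∈ (v.toBasis.repr x).support := by
        rw [Finsupp.mem_support_iff, OrthonormalBasis.coe_toBasis_repr_apply]
        exact h0
      exact hi (by exact_mod_cast h2 this)
    rw [qf_eq_sum hM]
    apply Finset.sum_nonneg
    intro i _
    by_cases hiS : i ∈ S
    · have : ¬ hM.eigenvalues i < 0 := by simpa [hS] using hiS
      have h0 : 0 ≤ hM.eigenvalues i := not_lt.1 this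
      positivity
    · rw [hsupp i hiS]; simp
  have hdisj : W ⊓ P = ⊥ := by
    rw [Submodule.eq_bot_iff]
    rintro x ⟨hxW, hxP⟩
    by_contra h0
    exact absurd (hPnn x hxP) (not_le.2 (hW x hxW h0))
  have hsum := Submodule.finrank_sup_add_finrank_inf_eq W P
  rw [hdisj] at hsum
  simp only [finrank_bot, add_zero] at hsum
  have hle : Module.finrank ℂ ↥(W ⊔ P) ≤ n := by
    simpa using Submodule.finrank_le (W ⊔ P)
  have hcard : S.card + (Finset.univ.filter fun i => hM.eigenvalues i < 0).card = n := by
    have h2 := Finset.card_filter_add_card_filter_not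
      (s := (Finset.univ : Finset (Fin n))) (p := fun i => hM.eigenvalues i < 0)
    simp only [Finset.card_univ, Fintype.card_fin] at h2
    rw [hS]
    omega
  omega

lemma card_pos_le (hM : M.IsHermitian) (W : Submodule ℂ (EuclideanSpace ℂ (Fin n)))
    (hW : ∀ x ∈ W, x ≠ 0 → 0 < qf M x) :
    Module.finrank ℂ W ≤ (Finset.univ.filter fun i => 0 < hM.eigenvalues i).card := by
  classical
  set v := hM.eigenvectorBasis with hv
  set S : Finset (Fin n) := Finset.univ.filter (fun i => ¬ 0 < hM.eigenvalues i) with hS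
  set P := Submodule.span ℂ (⇑v '' ↑S) with hP
  have hli : LinearIndependent ℂ (fun i : ↥(S : Set (Fin n)) => v i) :=
    v.orthonormal.linearIndependent.comp _ Subtype.val_injective
  have hrange : Set.range (fun i : ↥(S : Set (Fin n)) => v i) = ⇑v '' ↑S := by
    rw [← Set.image_eq_range]
  have hPrank : Module.finrank ℂ P = S.card := by
    rw [hP, ← hrange, finrank_span_eq_card hli]
    simp
  have hPnn : ∀ x ∈ P, qf M x ≤ 0 := by
    intro x hx
    have hsupp : ∀ i, i ∉ S → v.repr x i = 0 := by
      intro i hi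
      have : x ∈ Submodule.span ℂ (⇑v.toBasis '' ↑S) := by
        simpa [OrthonormalBasis.coe_toBasis] using hx
      have h2 := (v.toBasis.mem_span_image).1 this
      by_contra h0
      have : i ∈ (v.toBasis.repr x).support := by
        rw [Finsupp.mem_support_iff, OrthonormalBasis.coe_toBasis_repr_apply]
        exact h0
      exact hi (by exact_mod_cast h2 this)
    rw [qf_eq_sum hM]
    apply Finset.sum_nonpos
    intro i _
    by_cases hiS : i ∈ S
    · have : ¬ 0 < hM.eigenvalues i := by simpa [hS] using hiS
      have h0 : hM.eigenvalues i ≤ 0 := not_lt.1 this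
      exact mul_nonpos_of_nonpos_of_nonneg h0 (by positivity)
    · rw [hsupp i hiS]; simp
  have hdisj : W ⊓ P = ⊥ := by
    rw [Submodule.eq_bot_iff]
    rintro x ⟨hxW, hxP⟩
    by_contra h0
    exact absurd (hPnn x hxP) (not_le.2 (hW x hxW h0))
  have hsum := Submodule.finrank_sup_add_finrank_inf_eq W P
  rw [hdisj] at hsum
  simp only [finrank_bot, add_zero] at hsum
  have hle : Module.finrank ℂ ↥(W ⊔ P) ≤ n := by
    simpa using Submodule.finrank_le (W ⊔ P)
  have hcard : S.card + (Finset.univ.filter fun i => 0 < hM.eigenvalues i).card = n := by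
    have h2 := Finset.card_filter_add_card_filter_not
      (s := (Finset.univ : Finset (Fin n))) (p := fun i => 0 < hM.eigenvalues i)
    simp only [Finset.card_univ, Fintype.card_fin] at h2
    rw [hS]
    omega
  omega

lemma repr_eq_zero_of_mem_span (hM : M.IsHermitian) (S : Finset (Fin n))
    {x : EuclideanSpace ℂ (Fin n)}
    (hx : x ∈ Submodule.span ℂ (⇑hM.eigenvectorBasis '' ↑S)) {i : Fin n} (hi : i ∉ S) :
    hM.eigenvectorBasis.repr x i = 0 := by
  classical
  have : x ∈ Submodule.span ℂ (⇑hM.eigenvectorBasis.toBasis '' ↑S) := by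
    simpa [OrthonormalBasis.coe_toBasis] using hx
  have h2 := (hM.eigenvectorBasis.toBasis.mem_span_image).1 this
  by_contra h0
  have : i ∈ (hM.eigenvectorBasis.toBasis.repr x).support := by
    rw [Finsupp.mem_support_iff, OrthonormalBasis.coe_toBasis_repr_apply]
    exact h0
  exact hi (by exact_mod_cast h2 this)

lemma finrank_span_eigen (hM : M.IsHermitian) (S : Finset (Fin n)) :
    Module.finrank ℂ (Submodule.span ℂ (⇑hM.eigenvectorBasis '' ↑S)) = S.card := by
  classical
  have hli : LinearIndependent ℂ (fun i : ↥(S : Set (Fin n)) => hM.eigenvectorBasis i) :=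
    hM.eigenvectorBasis.orthonormal.linearIndependent.comp _ Subtype.val_injective
  have hrange : Set.range (fun i : ↥(S : Set (Fin n)) => hM.eigenvectorBasis i)
      = ⇑hM.eigenvectorBasis '' ↑S := by rw [← Set.image_eq_range]
  rw [← hrange, finrank_span_eq_card hli]
  simp

lemma qf_ge_on_span (hM : M.IsHermitian) (S : Finset (Fin n)) (r : ℝ)
    (hr : ∀ i ∈ S, r ≤ hM.eigenvalues i) {x : EuclideanSpace ℂ (Fin n)}
    (hx : x ∈ Submodule.span ℂ (⇑hM.eigenvectorBasis '' ↑S)) :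
    r * ‖x‖ ^ 2 ≤ qf M x := by
  classical
  have hzero : ∀ i ∈ Finset.univ, i ∉ S → hM.eigenvalues i *
      ‖hM.eigenvectorBasis.repr x i‖ ^ 2 = 0 := by
    intro i _ hi; rw [repr_eq_zero_of_mem_span hM S hx hi]; simp
  have hzero' : ∀ i ∈ Finset.univ, i ∉ S → ‖hM.eigenvectorBasis.repr x i‖ ^ 2 = 0 := by
    intro i _ hi; rw [repr_eq_zero_of_mem_span hM S hx hi]; simp
  rw [qf_eq_sum hM, norm_sq_eq_sum hM,
    ← Finset.sum_subset (Finset.subset_univ S) hzero,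
    ← Finset.sum_subset (Finset.subset_univ S) hzero', Finset.mul_sum]
  apply Finset.sum_le_sum
  intro i hi
  exact mul_le_mul_of_nonneg_right (hr i hi) (by positivity)

lemma qf_le_on_span (hM : M.IsHermitian) (S : Finset (Fin n)) (r : ℝ)
    (hr : ∀ i ∈ S, hM.eigenvalues i ≤ r) {x : EuclideanSpace ℂ (Fin n)}
    (hx : x ∈ Submodule.span ℂ (⇑hM.eigenvectorBasis '' ↑S)) :
    qf M x ≤ r * ‖x‖ ^ 2 := by
  classical
  have hzero : ∀ i ∈ Finset.univ, i ∉ S → hM.eigenvalues i *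
      ‖hM.eigenvectorBasis.repr x i‖ ^ 2 = 0 := by
    intro i _ hi; rw [repr_eq_zero_of_mem_span hM S hx hi]; simp
  have hzero' : ∀ i ∈ Finset.univ, i ∉ S → ‖hM.eigenvectorBasis.repr x i‖ ^ 2 = 0 := by
    intro i _ hi; rw [repr_eq_zero_of_mem_span hM S hx hi]; simp
  rw [qf_eq_sum hM, norm_sq_eq_sum hM,
    ← Finset.sum_subset (Finset.subset_univ S) hzero,
    ← Finset.sum_subset (Finset.subset_univ S) hzero', Finset.mul_sum]
  apply Finset.sum_le_sum
  intro i hi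
  exact mul_le_mul_of_nonneg_right (hr i hi) (by positivity)

noncomputable def CRbd (R : Matrix (Fin n) (Fin n) ℂ) : ℝ :=
  ‖LinearMap.toContinuousLinearMap (Matrix.toEuclideanLin R)‖

lemma abs_qf_le (R : Matrix (Fin n) (Fin n) ℂ) (x : EuclideanSpace ℂ (Fin n)) :
    |qf R x| ≤ CRbd R * ‖x‖ ^ 2 := by
  have h1 : |qf R x| ≤ ‖(inner ℂ x (Matrix.toEuclideanLin R x) : ℂ)‖ := by
    rw [qf]
    exact Complex.abs_re_le_norm _
  have h2 : ‖(inner ℂ x (Matrix.toEuclideanLin R x) : ℂ)‖ ≤ ‖x‖ * ‖Matrix.toEuclideanLin R x‖ :=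
    norm_inner_le_norm _ _
  have h3 : ‖Matrix.toEuclideanLin R x‖ ≤ CRbd R * ‖x‖ := by
    have h := (LinearMap.toContinuousLinearMap (Matrix.toEuclideanLin R)).le_opNorm x
    rwa [LinearMap.coe_toContinuousLinearMap'] at h
  calc |qf R x| ≤ ‖x‖ * ‖Matrix.toEuclideanLin R x‖ := le_trans h1 h2
    _ ≤ ‖x‖ * (CRbd R * ‖x‖) := by
        apply mul_le_mul_of_nonneg_left h3 (norm_nonneg x)
    _ = CRbd R * ‖x‖ ^ 2 := by ring

lemma qf_sub_smul (R L : Matrix (Fin n) (Fin n) ℂ) (η : ℝ) (x : EuclideanSpace ℂ (Fin n)) :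
    qf (R - (2 * η) • L) x = qf R x - (2 * η) * qf L x := by
  have hsmul : (2 * η) • L = (((2 * η : ℝ) : ℂ)) • L :=
    RCLike.real_smul_eq_coe_smul (K := ℂ) _ _
  rw [hsmul, qf, map_sub, _root_.map_smul]
  rw [LinearMap.sub_apply, LinearMap.smul_apply, inner_sub_right, inner_smul_right]
  simp only [Complex.sub_re, Complex.mul_re, Complex.ofReal_re, Complex.ofReal_im]
  simp [qf]

lemma exists_bound (R L : Matrix (Fin n) (Fin n) ℂ) (hL : L.IsHermitian) :
    ∃ B : ℝ, 0 < B ∧ ∀ η : ℝ, ∀ h : (R - (2 * η) • L).IsHermitian,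
      (B < η →
        ((Finset.univ.filter fun i => 0 < hL.eigenvalues i).card ≤
          (Finset.univ.filter fun i => h.eigenvalues i < 0).card ∧
         (Finset.univ.filter fun i => hL.eigenvalues i < 0).card ≤
          (Finset.univ.filter fun i => 0 < h.eigenvalues i).card)) ∧
      (η < -B →
        ((Finset.univ.filter fun i => 0 < hL.eigenvalues i).card ≤
          (Finset.univ.filter fun i => 0 < h.eigenvalues i).card ∧
         (Finset.univ.filter fun i => hL.eigenvalues i < 0).card ≤
          (Finset.univ.filter fun i => h.eigenvalues i < 0).card)) := by
  classical
  set Sp : Finset (Fin n) := Finset.univ.filter (fun i => 0 < hL.eigenvalues i) with hSp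
  set Sm : Finset (Fin n) := Finset.univ.filter (fun i => hL.eigenvalues i < 0) with hSm
  by_cases hne : (Sp ∪ Sm).Nonempty
  · set c : ℝ := (Sp ∪ Sm).inf' hne (fun i => |hL.eigenvalues i|) with hc
    have hcpos : 0 < c := by
      rw [hc, Finset.lt_inf'_iff]
      intro i hi
      rcases Finset.mem_union.1 hi with h' | h'
      · have := (Finset.mem_filter.1 h').2; exact abs_pos.2 (ne_of_gt this)
      · have := (Finset.mem_filter.1 h').2; exact abs_pos.2 (ne_of_lt this)
    have hcSp : ∀ i ∈ Sp, c ≤ hL.eigenvalues i := by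
      intro i hi
      have h1 : c ≤ |hL.eigenvalues i| :=
        Finset.inf'_le _ (Finset.mem_union_left _ hi)
      have h2 : 0 < hL.eigenvalues i := (Finset.mem_filter.1 hi).2
      rwa [abs_of_pos h2] at h1
    have hcSm : ∀ i ∈ Sm, hL.eigenvalues i ≤ -c := by
      intro i hi
      have h1 : c ≤ |hL.eigenvalues i| :=
        Finset.inf'_le _ (Finset.mem_union_right _ hi)
      have h2 : hL.eigenvalues i < 0 := (Finset.mem_filter.1 hi).2
      rw [abs_of_neg h2] at h1
      linarith
    have hCR : 0 ≤ CRbd R := norm_nonneg _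
    refine ⟨(CRbd R + 1) / (2 * c), by positivity, fun η h => ?_⟩
    constructor
    · intro hη
      have hηpos : 0 < η := lt_trans (by positivity) hη
      have hkey : CRbd R + 1 < 2 * η * c := by
        rw [div_lt_iff₀ (by positivity)] at hη
        nlinarith
      constructor
      · rw [← finrank_span_eigen hL Sp]
        apply card_neg_le h
        intro x hx hx0
        have hn : (0:ℝ) < ‖x‖ ^ 2 := pow_pos (norm_pos_iff.2 hx0) 2
        have h1 : c * ‖x‖ ^ 2 ≤ qf L x := qf_ge_on_span hL Sp c hcSp hx
        have h2 : qf R x ≤ CRbd R * ‖x‖ ^ 2 := (abs_le.1 (abs_qf_le R x)).2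
        rw [qf_sub_smul]
        nlinarith [mul_le_mul_of_nonneg_left h1 (by linarith : (0:ℝ) ≤ 2 * η),
          mul_lt_mul_of_pos_right hkey hn]
      · rw [← finrank_span_eigen hL Sm]
        apply card_pos_le h
        intro x hx hx0
        have hn : (0:ℝ) < ‖x‖ ^ 2 := pow_pos (norm_pos_iff.2 hx0) 2
        have h1 : qf L x ≤ -c * ‖x‖ ^ 2 := by
          have := qf_le_on_span hL Sm (-c) hcSm hx
          linarith
        have h2 : -(CRbd R * ‖x‖ ^ 2) ≤ qf R x := (abs_le.1 (abs_qf_le R x)).1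
        rw [qf_sub_smul]
        nlinarith [mul_le_mul_of_nonneg_left h1 (by linarith : (0:ℝ) ≤ 2 * η),
          mul_lt_mul_of_pos_right hkey hn]
    · intro hη
      have hηneg : η < 0 := by
        have : (0:ℝ) < (CRbd R + 1) / (2 * c) := by positivity
        linarith
      have hkey : CRbd R + 1 < 2 * (-η) * c := by
        have hη' : (CRbd R + 1) / (2 * c) < -η := by linarith
        rw [div_lt_iff₀ (by positivity)] at hη'
        nlinarith
      constructor
      · rw [← finrank_span_eigen hL Sp]
        apply card_pos_le h
        intro x hx hx0
        have hn : (0:ℝ) < ‖x‖ ^ 2 := pow_pos (norm_pos_iff.2 hx0) 2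
        have h1 : c * ‖x‖ ^ 2 ≤ qf L x := qf_ge_on_span hL Sp c hcSp hx
        have h2 : -(CRbd R * ‖x‖ ^ 2) ≤ qf R x := (abs_le.1 (abs_qf_le R x)).1
        rw [qf_sub_smul]
        nlinarith [mul_le_mul_of_nonneg_left h1 (by linarith : (0:ℝ) ≤ 2 * (-η)),
          mul_lt_mul_of_pos_right hkey hn]
      · rw [← finrank_span_eigen hL Sm]
        apply card_neg_le h
        intro x hx hx0
        have hn : (0:ℝ) < ‖x‖ ^ 2 := pow_pos (norm_pos_iff.2 hx0) 2
        have h1 : qf L x ≤ -c * ‖x‖ ^ 2 := by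
          have := qf_le_on_span hL Sm (-c) hcSm hx
          linarith
        have h2 : qf R x ≤ CRbd R * ‖x‖ ^ 2 := (abs_le.1 (abs_qf_le R x)).2
        rw [qf_sub_smul]
        nlinarith [mul_le_mul_of_nonneg_left h1 (by linarith : (0:ℝ) ≤ 2 * (-η)),
          mul_lt_mul_of_pos_right hkey hn]
  · rw [Finset.not_nonempty_iff_eq_empty, Finset.union_eq_empty] at hne
    refine ⟨1, one_pos, fun η h => ?_⟩
    have h1 : Sp.card = 0 := by rw [hne.1]; rfl
    have h2 : Sm.card = 0 := by rw [hne.2]; rfl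
    exact ⟨fun _ => ⟨by omega, by omega⟩, fun _ => ⟨by omega, by omega⟩⟩

lemma arith_contra (n j p q : ℕ) (hj : j ≤ n)
    (hY : max (n + 1 - j) (j + 1) ≤ max p q ∨ min (n + 1 - j) (j + 1) ≤ min p q)
    (hp : p ≤ j) (hq : q ≤ n - j) : False := by
  rcases hY with hmax | hmin
  · have h1 := le_trans (le_max_left (n + 1 - j) (j + 1)) hmax
    have h2 := le_trans (le_max_right (n + 1 - j) (j + 1)) hmax
    rcases le_total p q with hpq | hpq
    · rw [max_eq_right hpq] at h1 h2; omega
    · rw [max_eq_left hpq] at h1 h2; omega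
  · have h1 := le_trans hmin (min_le_left p q)
    have h2 := le_trans hmin (min_le_right p q)
    omega

lemma arith_contra' (n j p q : ℕ) (hj : j ≤ n)
    (hY : max (n + 1 - j) (j + 1) ≤ max p q ∨ min (n + 1 - j) (j + 1) ≤ min p q)
    (hp : p ≤ n - j) (hq : q ≤ j) : False :=
  arith_contra n j q p hj (by rwa [max_comm p q, min_comm p q] at hY) hq hp

end Aux

/-- Condition `Y(j)` for an `n×n` Hermitian matrix `L`: `L` has at least
`max (n+1−j) (j+1)` eigenvalues of the same sign (all positive or all negative, with
multiplicity), or at least `min (n+1−j) (j+1)` pairs of eigenvalues of opposite signs. -/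
def CondY (n j : ℕ) {L : Matrix (Fin n) (Fin n) ℂ} (hL : L.IsHermitian) : Prop :=
  max (n + 1 - j) (j + 1) ≤
      max (Finset.univ.filter fun i => 0 < hL.eigenvalues i).card
        (Finset.univ.filter fun i => hL.eigenvalues i < 0).card ∨
    min (n + 1 - j) (j + 1) ≤
      min (Finset.univ.filter fun i => 0 < hL.eigenvalues i).card
        (Finset.univ.filter fun i => hL.eigenvalues i < 0).card

/-- Let `R`, `L` be `n×n` complex Hermitian matrices and `j ∈ {0, …, n}`.  If `L` satisfies
condition `Y(j)`, then the set
`ℝ(j) = {η ∈ ℝ : R − 2ηL has exactly j negative and n−j positive eigenvalues}`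
is bounded. -/
theorem R_j_bounded
    (n : ℕ) (R L : Matrix (Fin n) (Fin n) ℂ)
    (hR : R.IsHermitian) (hL : L.IsHermitian)
    (j : ℕ) (hj : j ≤ n) (hY : CondY n j hL) :
    Bornology.IsBounded
      {η : ℝ | ∃ h : (R - (2 * η) • L).IsHermitian,
        (Finset.univ.filter fun i => h.eigenvalues i < 0).card = j ∧
        (Finset.univ.filter fun i => 0 < h.eigenvalues i).card = n - j} := by
  obtain ⟨B, hB, hbd⟩ := exists_bound R L hL
  apply Bornology.IsBounded.subset (Metric.isBounded_Icc (-B) B)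
  rintro η ⟨h, hneg, hpos⟩
  unfold CondY at hY
  simp only [Set.mem_Icc]
  constructor
  · by_contra hcon
    push_neg at hcon
    obtain ⟨h1, h2⟩ := (hbd η h).2 hcon
    rw [hpos] at h1
    rw [hneg] at h2
    exact arith_contra' n j _ _ hj hY h1 h2
  · by_contra hcon
    push_neg at hcon
    obtain ⟨h1, h2⟩ := (hbd η h).1 hcon
    rw [hneg] at h1
    rw [hpos] at h2
    exact arith_contra n j _ _ hj hY h1 h2
end
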